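/- If (a₁,a₂,a₃) and (b₁,b₂,b₃) are isosceles triples in a linearly ordered abelian group, then the triple (min{a₁,b₁}, min{a₂,b₂}, min{a₃,b₃}) is isosceles. -/

import Mathlib

/-- If `(a₁,a₂,a₃)` and `(b₁,b₂,b₃)` are isosceles triples in a linearly
ordered abelian group (each entry is `≥` the minimum of the other two), then the triple
`(min{a₁,b₁}, min{a₂,b₂}, min{a₃,b₃})` is isosceles. -/
theorem min_of_isosceles_triples_isosceles {Λ : Type*} [AddCommGroup Λ] [LinearOrder Λ]
    [IsOrderedAddMonoid Λ]
    (a₁ a₂ a₃ b₁ b₂ b₃ : Λ)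
    (ha : min a₂ a₃ ≤ a₁ ∧ min a₁ a₃ ≤ a₂ ∧ min a₁ a₂ ≤ a₃)
    (hb : min b₂ b₃ ≤ b₁ ∧ min b₁ b₃ ≤ b₂ ∧ min b₁ b₂ ≤ b₃) :
    min (min a₂ b₂) (min a₃ b₃) ≤ min a₁ b₁ ∧
    min (min a₁ b₁) (min a₃ b₃) ≤ min a₂ b₂ ∧
    min (min a₁ b₁) (min a₂ b₂) ≤ min a₃ b₃ := by
  obtain ⟨ha1, ha2, ha3⟩ := ha
  obtain ⟨hb1, hb2, hb3⟩ := hb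
  refine ⟨le_min ?_ ?_, le_min ?_ ?_, le_min ?_ ?_⟩
  · exact le_trans (min_le_min (min_le_left _ _) (min_le_left _ _)) ha1
  · exact le_trans (min_le_min (min_le_right _ _) (min_le_right _ _)) hb1
  · exact le_trans (min_le_min (min_le_left _ _) (min_le_left _ _)) ha2
  · exact le_trans (min_le_min (min_le_right _ _) (min_le_right _ _)) hb2
  · exact le_trans (min_le_min (min_le_left _ _) (min_le_left _ _)) ha3
  · exact le_trans (min_le_min (min_le_right _ _) (min_le_right _ _)) hb3
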